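/- arXiv:1607.04401 — 4 statements merged into one kernel-verified Lean document; each statement's English description precedes it below -/
import Mathlib

section
/- For integers p ≥ 3 and q ≥ 3, the equation cos²(π/p) + cos²(π/q) = 1 holds if and only if (p,q) ∈ {(4,4), (3,6), (6,3)}. -/
open Real

set_option maxHeartbeats 1000000

theorem prism_tiling_equation (p q : ℕ) (hp : 3 ≤ p) (hq : 3 ≤ q) :
    (Real.cos (π / p)) ^ 2 + (Real.cos (π / q)) ^ 2 = 1 ↔
      (p, q) = (4, 4) ∨ (p, q) = (3, 6) ∨ (p, q) = (6, 3) := by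
  have hp0 : (0:ℝ) < p := by positivity
  have hq0 : (0:ℝ) < q := by positivity
  have hpr : (3:ℝ) ≤ p := by exact_mod_cast hp
  have hqr : (3:ℝ) ≤ q := by exact_mod_cast hq
  have hpipos := Real.pi_pos
  constructor
  · intro h
    set a := π / p with ha
    set b := π / q with hb
    have ha1 : 0 < a := by positivity
    have ha2 : a ≤ π / 3 := by
      rw [ha]; apply div_le_div_of_nonneg_left hpipos.le (by norm_num) hpr
    have hb1 : 0 < b := by positivity
    have hb2 : b ≤ π / 3 := by
      rw [hb]; apply div_le_div_of_nonneg_left hpipos.le (by norm_num) hqr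
    have hsa : 0 < Real.sin a := Real.sin_pos_of_pos_of_lt_pi ha1 (by linarith)
    have hcb : 0 ≤ Real.cos b :=
      Real.cos_nonneg_of_mem_Icc ⟨by linarith, by linarith⟩
    have hsq : Real.cos b ^ 2 = Real.sin a ^ 2 := by
      have := Real.sin_sq_add_cos_sq a
      nlinarith [h]
    have heq : Real.cos b = Real.sin a := by
      nlinarith [hsq, hcb, hsa]
    have heq2 : Real.cos b = Real.cos (π / 2 - a) := by
      rw [heq, Real.cos_pi_div_two_sub]
    have hbeq : b = π / 2 - a := by
      apply Real.injOn_cos ⟨hb1.le, by linarith⟩ ⟨by linarith, by linarith⟩ heq2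
    have hpq : 2 * (q:ℝ) + 2 * p = p * q := by
      rw [ha, hb] at hbeq
      field_simp at hbeq
      nlinarith [Real.pi_ne_zero, hbeq, hpipos]
    have hN : 2 * q + 2 * p = p * q := by exact_mod_cast hpq
    have hZ : 2 * (q:ℤ) + 2 * (p:ℤ) = (p:ℤ) * q := by exact_mod_cast hN
    have hpZ : (3:ℤ) ≤ p := by exact_mod_cast hp
    have hqZ : (3:ℤ) ≤ q := by exact_mod_cast hq
    have hp6' : (p:ℤ) ≤ 6 := by
      nlinarith [mul_nonneg (by linarith : (0:ℤ) ≤ (q:ℤ) - 3) (by linarith : (0:ℤ) ≤ (p:ℤ) - 2)]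
    have hp6 : p ≤ 6 := by exact_mod_cast hp6'
    simp only [Prod.mk.injEq]
    interval_cases p <;> omega
  · rintro (h | h | h) <;>
    · simp only [Prod.mk.injEq] at h
      obtain ⟨h1, h2⟩ := h
      subst h1; subst h2
      norm_num [Real.cos_pi_div_four, Real.cos_pi_div_three, Real.cos_pi_div_six]
      nlinarith [Real.sq_sqrt (by norm_num : (2:ℝ) ≥ 0), Real.sq_sqrt (by norm_num : (3:ℝ) ≥ 0)]
end

section
/- The map M: ℝ³ → ℝ³ given by (x,y,z) ↦ (x, y, z − xy/2) conjugates the Nil rotation r(O,ω): (x,y,z) ↦ (x cos ω − y sin ω, x sin ω + y cos ω, z − xy/2 + (x²−y²) sin(2ω)/4 + xy cos(2ω)/2) to the Euclidean rotation about the z-axis by angle ω; that is, M ∘ r(O,ω) ∘ M⁻¹ = R_z(ω) where R_z(ω)(x,y,z) = (x cos ω − y sin ω, x sin ω + y cos ω, z). -/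
open Real

/-- The Nil rotation about the `z`-axis through angle `ω` (equation (2.4)). -/
noncomputable def nilRot (ω : ℝ) : ℝ × ℝ × ℝ → ℝ × ℝ × ℝ :=
  fun p =>
    (p.1 * Real.cos ω - p.2.1 * Real.sin ω,
     p.1 * Real.sin ω + p.2.1 * Real.cos ω,
     p.2.2 - p.1 * p.2.1 / 2 + (p.1 ^ 2 - p.2.1 ^ 2) * Real.sin (2 * ω) / 4
       + p.1 * p.2.1 * Real.cos (2 * ω) / 2)

/-- The quadratic mapping `M` of equation (2.5). -/
noncomputable def quadM : ℝ × ℝ × ℝ → ℝ × ℝ × ℝ :=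
  fun p => (p.1, p.2.1, p.2.2 - p.1 * p.2.1 / 2)

/-- The inverse of the quadratic mapping `M`. -/
noncomputable def quadMinv : ℝ × ℝ × ℝ → ℝ × ℝ × ℝ :=
  fun p => (p.1, p.2.1, p.2.2 + p.1 * p.2.1 / 2)

/-- The Euclidean rotation about the `z`-axis through angle `ω`. -/
noncomputable def euclRot (ω : ℝ) : ℝ × ℝ × ℝ → ℝ × ℝ × ℝ :=
  fun p =>
    (p.1 * Real.cos ω - p.2.1 * Real.sin ω,
     p.1 * Real.sin ω + p.2.1 * Real.cos ω, p.2.2)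

theorem quadM_conj_nilRot (ω : ℝ) :
    quadM ∘ nilRot ω ∘ quadMinv = euclRot ω := by
  funext p
  simp only [Function.comp, quadM, quadMinv, nilRot, euclRot, Real.sin_two_mul,
    Real.cos_two_mul']
  refine Prod.ext rfl (Prod.ext rfl ?_)
  have h := Real.sin_sq_add_cos_sq ω
  ring_nf
end

section
/- The Nil rotation r(O,ω) about the z-axis by angle ω, defined by (x,y,z) ↦ (x cos ω − y sin ω, x sin ω + y cos ω, z − xy/2 + (x²−y²) sin(2ω)/4 + xy cos(2ω)/2), satisfies r(O,ω₁) ∘ r(O,ω₂) = r(O, ω₁+ω₂); in particular r(O,2π/p) has order p for every integer p ≥ 1. -/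
open Real

lemma nilRot_comp (ω₁ ω₂ : ℝ) : nilRot ω₁ ∘ nilRot ω₂ = nilRot (ω₁ + ω₂) := by
  funext p
  simp only [nilRot, Function.comp_apply, Prod.mk.injEq]
  refine ⟨?_, ?_, ?_⟩
  · rw [Real.cos_add, Real.sin_add]; ring
  · rw [Real.cos_add, Real.sin_add]; ring
  · have h : (2 : ℝ) * (ω₁ + ω₂) = 2 * ω₁ + 2 * ω₂ := by ring
    rw [h, Real.cos_add, Real.sin_add, Real.sin_two_mul, Real.sin_two_mul,
      Real.cos_two_mul', Real.cos_two_mul']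
    ring

lemma nilRot_zero : nilRot 0 = id := by
  funext p
  simp [nilRot]

lemma nilRot_iterate (ω : ℝ) (k : ℕ) : (nilRot ω)^[k] = nilRot (k * ω) := by
  induction k with
  | zero => simp [nilRot_zero]
  | succ n ih =>
      rw [Function.iterate_succ', ih, nilRot_comp]
      push_cast
      ring_nf

theorem nilRot_add_and_order :
    (∀ ω₁ ω₂ : ℝ, nilRot ω₁ ∘ nilRot ω₂ = nilRot (ω₁ + ω₂)) ∧
    (∀ p : ℕ, 1 ≤ p →
      (nilRot (2 * π / p))^[p] = id ∧
      ∀ k : ℕ, 0 < k → k < p → (nilRot (2 * π / p))^[k] ≠ id) := by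
  refine ⟨nilRot_comp, fun p hp => ⟨?_, ?_⟩⟩
  · have hp0 : (p : ℝ) ≠ 0 := by positivity
    rw [nilRot_iterate]
    have : (p : ℝ) * (2 * π / p) = 2 * π := by field_simp
    rw [this]
    funext q
    have e1 : Real.sin (2 * (2 * π)) = 0 := by
      rw [show (2:ℝ) * (2*π) = 2*π + 2*π by ring, Real.sin_add, Real.cos_two_pi,
        Real.sin_two_pi]; ring
    have e2 : Real.cos (2 * (2 * π)) = 1 := by
      rw [show (2:ℝ) * (2*π) = 2*π + 2*π by ring, Real.cos_add, Real.cos_two_pi,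
        Real.sin_two_pi]; ring
    simp [nilRot, Real.cos_two_pi, Real.sin_two_pi, e1, e2]
  · intro k hk hkp hid
    rw [nilRot_iterate] at hid
    set θ : ℝ := k * (2 * π / p) with hθ
    have hx := congrArg (fun f => (f (1, 0, 0)).1) hid
    simp [nilRot] at hx
    have hppos : (0 : ℝ) < p := by exact_mod_cast Nat.lt_of_lt_of_le Nat.zero_lt_one hp
    have hθpos : 0 < θ := by
      apply mul_pos
      · exact_mod_cast hk
      · positivity
    have hθlt : θ < 2 * π := by
      rw [hθ]
      have h2 : (k : ℝ) < p := by exact_mod_cast hkp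
      calc (k:ℝ) * (2 * π / p) < (p:ℝ) * (2 * π / p) := by
            apply mul_lt_mul_of_pos_right h2
            positivity
        _ = 2 * π := by field_simp
    have := (Real.cos_eq_one_iff_of_lt_of_lt (by linarith) hθlt).mp hx
    linarith
end

section
/- For integers p, q ≥ 3 with (p,q) ∉ {(3,6),(4,4),(6,3)}, we have cos²(π/p) + cos²(π/q) ≠ 1; moreover if p ≥ 7 and q ≥ 3 then cos²(π/p) + cos²(π/q) > 1, and if p = 3 and q ≥ 7 then cos²(π/3) + cos²(π/q) > 1. -/
open Real

lemma cos_nonneg_aux {n : ℕ} (h : 2 ≤ n) : 0 ≤ Real.cos (π / n) := by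
  apply Real.cos_nonneg_of_mem_Icc
  have hn : (2:ℝ) ≤ n := by exact_mod_cast h
  constructor
  · have : (0:ℝ) ≤ π / n := by positivity
    linarith [Real.pi_pos]
  · rw [div_le_div_iff₀ (by positivity) (by norm_num)]
    nlinarith [Real.pi_pos]

lemma pi_div_le {m n : ℕ} (h2 : 2 ≤ m) (h : m ≤ n) : π / n ≤ π / m := by
  have hm : (0:ℝ) < m := by positivity
  have hmn : (m:ℝ) ≤ n := by exact_mod_cast h
  exact div_le_div_of_nonneg_left Real.pi_pos.le hm hmn

lemma cos_sq_mono {m n : ℕ} (h2 : 2 ≤ m) (h : m ≤ n) :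
    Real.cos (π / m) ^ 2 ≤ Real.cos (π / n) ^ 2 := by
  have hn2 : 2 ≤ n := le_trans h2 h
  have hle : Real.cos (π / m) ≤ Real.cos (π / n) := by
    apply Real.cos_le_cos_of_nonneg_of_le_pi
    · positivity
    · have : π / m ≤ π / 2 := pi_div_le le_rfl h2
      linarith [Real.pi_pos]
    · exact pi_div_le h2 h
  exact pow_le_pow_left₀ (cos_nonneg_aux h2) hle 2

lemma cos_sq_strict {m n : ℕ} (h2 : 2 ≤ m) (h : m < n) :
    Real.cos (π / m) ^ 2 < Real.cos (π / n) ^ 2 := by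
  have hn2 : 2 ≤ n := le_trans h2 h.le
  have hlt : Real.cos (π / m) < Real.cos (π / n) := by
    apply Real.cos_lt_cos_of_nonneg_of_le_pi
    · positivity
    · have : π / m ≤ π / 2 := pi_div_le le_rfl h2
      linarith [Real.pi_pos]
    · have hm : (0:ℝ) < m := by positivity
      have hn : (0:ℝ) < n := by positivity
      have hmn : (m:ℝ) < n := by exact_mod_cast h
      exact div_lt_div_of_pos_left Real.pi_pos hm hmn
  exact pow_lt_pow_left₀ hlt (cos_nonneg_aux h2) (by norm_num)

lemma f3 : Real.cos (π / 3) ^ 2 = 1/4 := by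
  rw [Real.cos_pi_div_three]; norm_num

lemma f4 : Real.cos (π / 4) ^ 2 = 1/2 := by
  rw [Real.cos_pi_div_four]
  rw [div_pow, Real.sq_sqrt (by norm_num : (2:ℝ) ≥ 0)]; norm_num

lemma f5 : Real.cos (π / 5) ^ 2 = (3 + Real.sqrt 5) / 8 := by
  rw [Real.cos_pi_div_five]
  have : Real.sqrt 5 ^ 2 = 5 := Real.sq_sqrt (by norm_num)
  ring_nf
  nlinarith [this]

lemma f6 : Real.cos (π / 6) ^ 2 = 3/4 := by
  rw [Real.cos_pi_div_six]
  rw [div_pow, Real.sq_sqrt (by norm_num : (3:ℝ) ≥ 0)]; norm_num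

lemma key2 (p q : ℕ) (hp : 7 ≤ p) (hq : 3 ≤ q) :
    1 < Real.cos (π / p) ^ 2 + Real.cos (π / q) ^ 2 := by
  have h1 : Real.cos (π / (6:ℕ)) ^ 2 < Real.cos (π / p) ^ 2 :=
    cos_sq_strict (by norm_num) (by omega)
  have h2 : Real.cos (π / (3:ℕ)) ^ 2 ≤ Real.cos (π / q) ^ 2 :=
    cos_sq_mono (by norm_num) hq
  have e6 : Real.cos (π / ((6:ℕ):ℝ)) ^ 2 = 3/4 := by
    rw [Nat.cast_ofNat]; exact f6
  have e3 : Real.cos (π / ((3:ℕ):ℝ)) ^ 2 = 1/4 := by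
    rw [Nat.cast_ofNat]; exact f3
  linarith

theorem prism_tiling_nonexistence :
    (∀ p q : ℕ, 3 ≤ p → 3 ≤ q →
      ¬((p, q) = (3, 6) ∨ (p, q) = (4, 4) ∨ (p, q) = (6, 3)) →
      Real.cos (π / p) ^ 2 + Real.cos (π / q) ^ 2 ≠ 1) ∧
    (∀ p q : ℕ, 7 ≤ p → 3 ≤ q →
      1 < Real.cos (π / p) ^ 2 + Real.cos (π / q) ^ 2) ∧
    (∀ q : ℕ, 7 ≤ q →
      1 < Real.cos (π / 3) ^ 2 + Real.cos (π / q) ^ 2) := by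
  refine ⟨?_, key2, ?_⟩
  · intro p q hp hq hne
    by_cases hp7 : 7 ≤ p
    · exact ne_of_gt (key2 p q hp7 hq)
    by_cases hq7 : 7 ≤ q
    · have := key2 q p hq7 hp
      intro h; rw [add_comm] at h; exact ne_of_gt this h
    have hp6 : p ≤ 6 := by omega
    have hq6 : q ≤ 6 := by omega
    have s5 : Real.sqrt 5 ^ 2 = 5 := Real.sq_sqrt (by norm_num)
    have s5n : 0 ≤ Real.sqrt 5 := Real.sqrt_nonneg 5
    have s2 : Real.sqrt 2 ^ 2 = 2 := Real.sq_sqrt (by norm_num)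
    have s3 : Real.sqrt 3 ^ 2 = 3 := Real.sq_sqrt (by norm_num)
    intro heq
    interval_cases p <;> interval_cases q <;>
      simp only [Nat.cast_ofNat, Real.cos_pi_div_three, Real.cos_pi_div_four,
        Real.cos_pi_div_five, Real.cos_pi_div_six] at heq <;>
      first
        | exact hne (Or.inl rfl)
        | exact hne (Or.inr (Or.inl rfl))
        | exact hne (Or.inr (Or.inr rfl))
        | nlinarith [s2, s3, s5, s5n]
  · intro q hq
    have hgt : (3:ℝ)/4 < Real.cos (π / q) ^ 2 := by
      have h := cos_sq_strict (m := 6) (n := q) (by norm_num) (by omega)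
      have e6 : Real.cos (π / ((6:ℕ):ℝ)) ^ 2 = 3/4 := by
        rw [Nat.cast_ofNat]; exact f6
      linarith
    rw [f3]
    linarith
end
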